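/- For r ≥ 1, the identity 2(r+2) ∫_{−1}^{1} t√(1−t²) P_{2r+1}(t) dt = (2r+1) ∫_{−1}^{1} √(1−t²) P_{2r}(t) dt holds. -/

import Mathlib

open Polynomial

/-- The `n`-th Legendre polynomial (Rodrigues' formula), normalized so that `P n 1 = 1`. -/
noncomputable def legendre (n : ℕ) : Polynomial ℝ :=
  (((2 : ℝ) ^ n * n.factorial)⁻¹) • (derivative^[n] ((X ^ 2 - 1) ^ n))

private lemma itadd (k : ℕ) (a b : ℝ[X]) :
    derivative^[k] (a + b) = derivative^[k] a + derivative^[k] b := by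
  induction k generalizing a b with
  | zero => rfl
  | succ k ih => rw [Function.iterate_succ_apply, derivative_add, ih,
      Function.iterate_succ_apply, Function.iterate_succ_apply]

private lemma leib1 (k : ℕ) (p : ℝ[X]) :
    derivative^[k+1] (X * p) = X * derivative^[k+1] p + C ((k:ℝ)+1) * derivative^[k] p := by
  induction k generalizing p with
  | zero => simp [derivative_mul]; ring
  | succ k ih =>
      rw [Function.iterate_succ_apply, derivative_mul, derivative_X, one_mul,
        itadd, ih (derivative p), ← Function.iterate_succ_apply,
        ← Function.iterate_succ_apply]
      push_cast
      simp only [C_add, C_1]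
      ring

private lemma leib2 (k : ℕ) (p : ℝ[X]) :
    derivative^[k+2] ((X^2 - 1) * p) = (X^2-1) * derivative^[k+2] p
      + C (2*((k:ℝ)+2)) * (X * derivative^[k+1] p) + C (((k:ℝ)+2)*((k:ℝ)+1)) * derivative^[k] p := by
  have h : (X^2 - 1 : ℝ[X]) * p = X * (X * p) - p := by ring
  rw [h, iterate_derivative_sub, leib1 (k+1) (X*p), leib1 k p, leib1 (k+1) p]
  push_cast
  simp only [C_add, C_mul, C_1, map_ofNat]
  ring

private lemma dpow (n : ℕ) :
    derivative ((X^2-1:ℝ[X])^(n+1)) = C (2*((n:ℝ)+1)) * (X * (X^2-1)^n) := by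
  rw [derivative_pow]
  simp only [Nat.add_sub_cancel, derivative_sub, derivative_one, derivative_X_pow]
  push_cast
  simp only [C_add, C_mul, C_1, map_ofNat]
  ring

private lemma ode (m : ℕ) :
    (X^2-1) * derivative^[m+3] ((X^2-1:ℝ[X])^(m+2))
      = C (((m:ℝ)+2)*((m:ℝ)+3)) * derivative^[m+1] ((X^2-1)^(m+2)) := by
  have base : (X^2-1) * derivative ((X^2-1:ℝ[X])^(m+2)) =
      C (2*((m:ℝ)+2)) * (X * (X^2-1)^(m+2)) := by
    rw [dpow (m+1)]
    push_cast
    ring_nf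
  have h := congrArg (derivative^[m+2]) base
  rw [leib2 m (derivative ((X^2-1:ℝ[X])^(m+2))), iterate_derivative_C_mul,
    leib1 (m+1)] at h
  rw [← Function.iterate_succ_apply derivative (m+2), ← Function.iterate_succ_apply derivative (m+1),
    ← Function.iterate_succ_apply derivative m] at h
  simp only [Nat.succ_eq_add_one, Nat.cast_add, Nat.cast_one, Nat.cast_ofNat] at h ⊢
  simp only [C_add, C_mul, C_1, map_ofNat] at h ⊢
  linear_combination h

private lemma leg_star (q : ℕ) :
    (X^2-1) * derivative^[q+4] ((X^2-1:ℝ[X])^(q+3))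
      = C ((q:ℝ)+3) * (X * derivative^[q+3] ((X^2-1)^(q+3)))
        - C (2*((q:ℝ)+3)^2) * derivative^[q+2] ((X^2-1)^(q+2)) := by
  have hd := dpow (q+2)
  have hB := congrArg (derivative^[q+3]) hd
  have hA := congrArg (derivative^[q+2]) hd
  rw [iterate_derivative_C_mul, leib1 (q+2), ← Function.iterate_succ_apply derivative (q+3)] at hB
  rw [iterate_derivative_C_mul, leib1 (q+1), ← Function.iterate_succ_apply derivative (q+2)] at hA
  have hC := ode q
  simp only [Nat.succ_eq_add_one, Nat.cast_add, Nat.cast_one, Nat.cast_ofNat] at hB hA hC ⊢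
  simp only [C_add, C_mul, C_pow, C_1, map_ofNat] at hB hA hC ⊢
  linear_combination (X^2-1) * hB - ((C (q:ℝ)) + 3) * X * hA + 2*((C (q:ℝ)) + 3) * X * hC

private lemma legendre_rec (s : ℕ) :
    (X^2-1) * derivative (legendre (2*s+3))
      = C (2*(s:ℝ)+3) * (X * legendre (2*s+3) - legendre (2*s+2)) := by
  have hs := leg_star (2*s)
  have key : (2*(2*(s:ℝ)+3)^2) * (((2:ℝ)^(2*s+3) * ((2*s+3).factorial : ℝ))⁻¹)
      = (2*(s:ℝ)+3) * (((2:ℝ)^(2*s+2) * ((2*s+2).factorial : ℝ))⁻¹) := by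
    have h1 : (((2*s+3).factorial : ℕ) : ℝ) = (2*(s:ℝ)+3) * ((2*s+2).factorial : ℝ) := by
      rw [show 2*s+3 = (2*s+2)+1 from rfl, Nat.factorial_succ]
      push_cast; ring
    have h2 : ((2*s+2).factorial : ℝ) ≠ 0 := Nat.cast_ne_zero.2 (Nat.factorial_ne_zero _)
    have h3 : (2:ℝ)^(2*s+3) = 2 * 2^(2*s+2) := by rw [pow_succ]; ring
    rw [h1, h3]
    field_simp
  have Ckey : (C (2*(2*(s:ℝ)+3)^2) * C (((2:ℝ)^(2*s+3) * ((2*s+3).factorial : ℝ))⁻¹) : ℝ[X])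
      = C (2*(s:ℝ)+3) * C (((2:ℝ)^(2*s+2) * ((2*s+2).factorial : ℝ))⁻¹) := by
    rw [← C_mul, ← C_mul, key]
  unfold legendre
  rw [smul_eq_C_mul, smul_eq_C_mul, derivative_C_mul,
    ← Function.iterate_succ_apply' derivative (2*s+3)]
  rw [show 2*s+4 = 2*s+3+1 from rfl] at hs
  simp only [Nat.succ_eq_add_one] at hs ⊢
  push_cast at hs ⊢
  linear_combination C (((2:ℝ)^(2*s+3) * ((2*s+3).factorial : ℝ))⁻¹) * hs
    - (derivative^[2*s+2] ((X^2-1:ℝ[X])^(2*s+2))) * Ckey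

private lemma legendre_rec_eval (s : ℕ) (t : ℝ) :
    (1 - t^2) * (derivative (legendre (2*s+3))).eval t
      = (2*(s:ℝ)+3) * ((legendre (2*s+2)).eval t - t * (legendre (2*s+3)).eval t) := by
  have h := congrArg (eval t) (legendre_rec s)
  simp only [eval_mul, eval_sub, eval_add, eval_pow, eval_X, eval_one, eval_C] at h
  linear_combination -h

private lemma sqrt_cont : Continuous fun t : ℝ => Real.sqrt (1-t^2) :=
  (continuous_const.sub (continuous_pow 2)).sqrt

private lemma parts (P : ℝ[X]) :
    (∫ t in (-1:ℝ)..1, ((1-t^2) * Real.sqrt (1-t^2) * (derivative P).eval t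
        - 3 * (t * Real.sqrt (1-t^2) * P.eval t))) = 0 := by
  have hcont : Continuous (fun t : ℝ => (1-t^2) * Real.sqrt (1-t^2) * P.eval t) :=
    ((continuous_const.sub (continuous_pow 2)).mul sqrt_cont).mul P.continuous
  have hcont' : Continuous (fun t : ℝ => (1-t^2) * Real.sqrt (1-t^2) * (derivative P).eval t
      - 3 * (t * Real.sqrt (1-t^2) * P.eval t)) :=
    (((continuous_const.sub (continuous_pow 2)).mul sqrt_cont).mul (derivative P).continuous).sub
      (continuous_const.mul ((continuous_id.mul sqrt_cont).mul P.continuous))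
  have key := intervalIntegral.integral_eq_sub_of_hasDeriv_right_of_le
    (f := fun t : ℝ => (1-t^2) * Real.sqrt (1-t^2) * P.eval t)
    (f' := fun t : ℝ => (1-t^2) * Real.sqrt (1-t^2) * (derivative P).eval t
      - 3 * (t * Real.sqrt (1-t^2) * P.eval t))
    (by norm_num : (-1:ℝ) ≤ 1) hcont.continuousOn
    (fun x hx => by
      have h0 : (0:ℝ) < 1 - x^2 := by
        rcases hx with ⟨ha, hb⟩; nlinarith
      have hsp : 0 < Real.sqrt (1-x^2) := Real.sqrt_pos.2 h0
      have hsq : Real.sqrt (1-x^2)^2 = 1-x^2 := Real.sq_sqrt h0.le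
      have h1 : HasDerivAt (fun t : ℝ => 1 - t^2) (-(2*x)) x := by
        simpa using (hasDerivAt_pow 2 x).const_sub 1
      have hsqrt : HasDerivAt (fun t : ℝ => Real.sqrt (1-t^2))
          (-(2*x) / (2*Real.sqrt (1-x^2))) x := h1.sqrt h0.ne'
      have hprod := (h1.mul hsqrt).mul (P.hasDerivAt x)
      have heq : ((-(2*x)) * Real.sqrt (1-x^2) + (1-x^2) * (-(2*x) / (2*Real.sqrt (1-x^2))))
            * P.eval x + ((1-x^2) * Real.sqrt (1-x^2)) * (derivative P).eval x
          = (1-x^2) * Real.sqrt (1-x^2) * (derivative P).eval x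
            - 3 * (x * Real.sqrt (1-x^2) * P.eval x) := by
        field_simp
        linear_combination (x*eval x P) * hsq
      exact (heq ▸ hprod).hasDerivWithinAt)
    (hcont'.intervalIntegrable _ _)
  rw [key]
  norm_num

theorem odd_legendre_integral_identity (r : ℕ) (hr : 1 ≤ r) :
    2 * ((r : ℝ) + 2) * ∫ t in (-1 : ℝ)..1, t * Real.sqrt (1 - t ^ 2) * (legendre (2 * r + 1)).eval t
      = (2 * (r : ℝ) + 1) * ∫ t in (-1 : ℝ)..1, Real.sqrt (1 - t ^ 2) * (legendre (2 * r)).eval t := by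
  obtain ⟨s, rfl⟩ : ∃ s, r = s + 1 := ⟨r - 1, by omega⟩
  rw [show 2*(s+1)+1 = 2*s+3 from by ring, show 2*(s+1) = 2*s+2 from by ring]
  have h0 := parts (legendre (2*s+3))
  have hfe : (fun t : ℝ => (1-t^2) * Real.sqrt (1-t^2) * (derivative (legendre (2*s+3))).eval t
        - 3 * (t * Real.sqrt (1-t^2) * (legendre (2*s+3)).eval t))
      = fun t : ℝ => (2*(s:ℝ)+3) * (Real.sqrt (1-t^2) * (legendre (2*s+2)).eval t)
        - (2*(s:ℝ)+6) * (t * Real.sqrt (1-t^2) * (legendre (2*s+3)).eval t) := by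
    funext t
    have h := legendre_rec_eval s t
    linear_combination Real.sqrt (1-t^2) * h
  rw [hfe] at h0
  rw [intervalIntegral.integral_sub
      (f := fun t : ℝ => (2*(s:ℝ)+3) * (Real.sqrt (1-t^2) * (legendre (2*s+2)).eval t))
      (g := fun t : ℝ => (2*(s:ℝ)+6) * (t * Real.sqrt (1-t^2) * (legendre (2*s+3)).eval t))
      ((continuous_const.mul (sqrt_cont.mul (legendre (2*s+2)).continuous)).intervalIntegrable _ _)
      ((continuous_const.mul ((continuous_id'.mul sqrt_cont).mul
        (legendre (2*s+3)).continuous)).intervalIntegrable _ _),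
    intervalIntegral.integral_const_mul, intervalIntegral.integral_const_mul] at h0
  push_cast
  linarith [h0]
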